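/- For all integers n ≥ 2 and 0 ≤ k ≤ n - 1: (1 - k/n) + ((n-k)(n^2 - n + k)/(n(n-1))) * (H_n - 1) ≤ (n - k) * (1 + 1/n) * (H_{n+1} - 1), where H_m = Σ_{j=1}^{m} 1/j is the m-th harmonic number. -/

import Mathlib

noncomputable def harm (m : ℕ) : ℝ := ∑ k ∈ Finset.Icc 1 m, (1 : ℝ) / k

theorem stmt_4 (n k : ℕ) (hn : 2 ≤ n) (hk : k ≤ n - 1) :
    (1 - (k : ℝ) / n) +
      (((n : ℝ) - k) * ((n : ℝ) ^ 2 - n + k) / ((n : ℝ) * ((n : ℝ) - 1))) *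
        (harm n - 1)
      ≤ ((n : ℝ) - k) * (1 + 1 / (n : ℝ)) * (harm (n + 1) - 1) := by
  have hn2 : (2:ℝ) ≤ n := by exact_mod_cast hn
  have hnpos : (0:ℝ) < n := by linarith
  have hne : (n:ℝ) ≠ 0 := ne_of_gt hnpos
  have hnp1 : (n:ℝ) + 1 ≠ 0 := by positivity
  have hkr : (k:ℝ) ≤ (n:ℝ) - 1 := by
    have : (k:ℝ) ≤ ((n-1 : ℕ) : ℝ) := by exact_mod_cast hk
    rwa [Nat.cast_sub (by omega), Nat.cast_one] at this
  have hnk : (0:ℝ) ≤ (n:ℝ) - k := by linarith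
  have hsucc : harm (n + 1) = harm n + 1 / (n + 1 : ℝ) := by
    unfold harm
    rw [Finset.sum_Icc_succ_top (a := 1) (b := n) (by omega)]
    push_cast
    ring
  have hH : (1:ℝ) ≤ harm n := by
    have h1 : (1:ℕ) ∈ Finset.Icc 1 n := by simp; omega
    have := Finset.single_le_sum (f := fun j : ℕ => (1:ℝ)/j)
      (fun i _ => by positivity) h1
    simpa [harm] using this
  have hA : ((n:ℝ) - k) * ((n:ℝ)^2 - n + k) / ((n:ℝ) * ((n:ℝ) - 1))
      ≤ ((n:ℝ) - k) * (1 + 1/(n:ℝ)) := by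
    rw [div_le_iff₀ (by nlinarith)]
    have h1 : (1:ℝ) + 1/(n:ℝ) = ((n:ℝ)+1)/n := by field_simp
    have h2 : ((n:ℝ) - k) * (((n:ℝ)+1)/n) * ((n:ℝ) * ((n:ℝ) - 1))
        = ((n:ℝ) - k) * ((n:ℝ)+1) * ((n:ℝ)-1) := by field_simp
    rw [h1, h2]
    nlinarith [mul_le_mul_of_nonneg_left (show (n:ℝ)^2 - n + k ≤ (n:ℝ)^2 - 1 by linarith) hnk]
  have step : (1 - (k : ℝ) / n) +
      (((n : ℝ) - k) * ((n : ℝ) ^ 2 - n + k) / ((n : ℝ) * ((n : ℝ) - 1))) * (harm n - 1)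
      ≤ (1 - (k : ℝ) / n) + (((n:ℝ) - k) * (1 + 1/(n:ℝ))) * (harm n - 1) := by
    gcongr
  refine step.trans (le_of_eq ?_)
  rw [hsucc]
  field_simp
  ring
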